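/- For every point u in the amoeba complement ℝ^n ∖ 𝒜_p, each component ν_j(u) of the order vector is a (real) integer, i.e., ν(u) ∈ ℤ^n. -/

import Mathlib

open MeasureTheory Real

noncomputable section

/-- Evaluation of the Laurent polynomial with support `A` and coefficients `c`
at the point `z`. -/
def lEval {n : ℕ} (A : Finset (Fin n → ℤ)) (c : (Fin n → ℤ) → ℂ)
    (z : Fin n → ℂ) : ℂ :=
  ∑ α ∈ A, c α * ∏ i, z i ^ α i

/-- The coordinatewise logarithm of moduli. -/
def logMap {n : ℕ} (z : Fin n → ℂ) : Fin n → ℝ :=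
  fun i => Real.log ‖z i‖

/-- The amoeba of the Laurent polynomial with support `A` and coefficients `c`. -/
def amoeba {n : ℕ} (A : Finset (Fin n → ℤ)) (c : (Fin n → ℤ) → ℂ) :
    Set (Fin n → ℝ) :=
  logMap '' {z | (∀ i, z i ≠ 0) ∧ lEval A c z = 0}

/-- The point of the complex torus with radial coordinates `e^u` and angles `θ`. -/
def tPt {n : ℕ} (u θ : Fin n → ℝ) : Fin n → ℂ :=
  fun i => Complex.exp (u i + θ i * Complex.I)

/-- The cube `[0, 2π]^n`. -/
def cube (n : ℕ) : Set (Fin n → ℝ) := Set.univ.pi fun _ => Set.Icc 0 (2 * π)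

/-- The order vector of a point `u` in the amoeba complement. -/
def order {n : ℕ} (A : Finset (Fin n → ℤ)) (c : (Fin n → ℤ) → ℂ)
    (u : Fin n → ℝ) : Fin n → ℂ := fun j =>
  (((2 * π) ^ n : ℝ) : ℂ)⁻¹ *
    ∫ θ in cube n,
      (∑ α ∈ A, c α * (α j : ℂ) * ∏ i, tPt u θ i ^ α i) / lEval A c (tPt u θ)

/-- The Ronkin function. -/
def ronkin {n : ℕ} (A : Finset (Fin n → ℤ)) (c : (Fin n → ℤ) → ℂ)
    (x : Fin n → ℝ) : ℝ :=
  ((2 * π) ^ n)⁻¹ * ∫ θ in cube n, Real.log ‖lEval A c (tPt x θ)‖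

/-- The Newton polytope of the support `A`. -/
def newton {n : ℕ} (A : Finset (Fin n → ℤ)) : Set (Fin n → ℝ) :=
  convexHull ℝ ((fun (α : Fin n → ℤ) (i : Fin n) => (α i : ℝ)) '' (A : Set (Fin n → ℤ)))

end

open intervalIntegral in
/-- 1-D key lemma: the "logarithmic derivative" integral of a nonvanishing
trigonometric polynomial over a full period is `2π` times an integer. -/
lemma integral_quot_eq_int {ι : Type*} (A : Finset ι) (d : ι → ℂ) (k : ι → ℤ) (w : ι → ℂ)
    (hf : ∀ t : ℝ, (∑ α ∈ A, d α * Complex.exp (w α + (k α : ℂ) * t * Complex.I)) ≠ 0) :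
    ∃ m : ℤ, (∫ t in (0:ℝ)..(2*π),
        (∑ α ∈ A, d α * (k α : ℂ) * Complex.exp (w α + (k α : ℂ) * t * Complex.I)) /
        (∑ α ∈ A, d α * Complex.exp (w α + (k α : ℂ) * t * Complex.I)))
      = 2 * π * (m : ℂ) := by
  set F : ℝ → ℂ := fun t => ∑ α ∈ A, d α * Complex.exp (w α + (k α : ℂ) * t * Complex.I) with hF
  set N : ℝ → ℂ := fun t => ∑ α ∈ A, d α * (k α : ℂ) * Complex.exp (w α + (k α : ℂ) * t * Complex.I) with hN
  have hFc : Continuous F := by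
    apply continuous_finset_sum; intro α _; fun_prop
  have hNc : Continuous N := by
    apply continuous_finset_sum; intro α _; fun_prop
  set Q : ℝ → ℂ := fun t => N t / F t with hQ
  have hQc : Continuous Q := hNc.div hFc hf
  have hFd : ∀ t : ℝ, HasDerivAt F (Complex.I * N t) t := by
    intro t
    have h : ∀ α ∈ A, HasDerivAt
        (fun t : ℝ => d α * Complex.exp (w α + (k α : ℂ) * t * Complex.I))
        (Complex.I * (d α * (k α : ℂ) * Complex.exp (w α + (k α : ℂ) * t * Complex.I))) t := by
      intro α _
      have h0 : HasDerivAt (fun t : ℝ => (t : ℂ)) 1 t := by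
        simpa using (hasDerivAt_id t).ofReal_comp
      have h1 := ((h0.const_mul ((k α : ℂ))).mul_const Complex.I).const_add (w α)
      have h2 := h1.cexp
      have h3 := h2.const_mul (d α)
      convert h3 using 1
      · rfl
      ring
    have := HasDerivAt.fun_sum h
    simpa [hN, Finset.mul_sum] using this
  set L : ℝ → ℂ := fun s => ∫ t in (0:ℝ)..s, Q t with hLdef
  have hL : ∀ s : ℝ, HasDerivAt L (Q s) s := by
    intro s
    exact integral_hasDerivAt_right (hQc.intervalIntegrable 0 s)
      (hQc.stronglyMeasurable.stronglyMeasurableAtFilter) hQc.continuousAt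
  set G : ℝ → ℂ := fun s => F s * Complex.exp (-(Complex.I * L s)) with hGdef
  have hG : ∀ s : ℝ, HasDerivAt G 0 s := by
    intro s
    have hexp : HasDerivAt (fun s => Complex.exp (-(Complex.I * L s)))
        (Complex.exp (-(Complex.I * L s)) * (-(Complex.I * Q s))) s :=
      (((hL s).const_mul Complex.I).neg).cexp
    have := (hFd s).mul hexp
    convert this using 1
    · rfl
    have hFs : F s ≠ 0 := hf s
    show (0:ℂ) = Complex.I * N s * _ + F s * (_ * -(Complex.I * (N s / F s)))
    field_simp
    rw [div_self (hf s)]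
    ring
    rfl
  have hconst : G (2 * π) = G 0 :=
    is_const_of_deriv_eq_zero (fun s => (hG s).differentiableAt)
      (fun s => (hG s).deriv) _ _
  have hper : F (2 * π) = F 0 := by
    refine Finset.sum_congr rfl fun α _ => ?_
    have : (w α + (k α : ℂ) * ((2:ℝ)*π : ℝ) * Complex.I)
        = (w α + (k α : ℂ) * ((0:ℝ) : ℂ) * Complex.I) + (k α : ℂ) * (2 * π * Complex.I) := by
      push_cast; ring
    rw [this, Complex.exp_add, Complex.exp_int_mul_two_pi_mul_I, mul_one]
  have hL0 : L 0 = 0 := intervalIntegral.integral_same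
  have hexp1 : Complex.exp (-(Complex.I * L (2 * π))) = 1 := by
    have := hconst
    rw [hGdef] at this
    simp only [hper, hL0, mul_zero, neg_zero, Complex.exp_zero, mul_one] at this
    exact (mul_eq_left₀ (show F 0 ≠ 0 from hf 0)).mp this
  have hexp1' : Complex.exp (Complex.I * L (2 * π)) = 1 := by
    have := congrArg (fun z => z⁻¹) hexp1
    simpa [Complex.exp_neg] using this
  obtain ⟨m, hm⟩ := Complex.exp_eq_one_iff.mp hexp1'
  refine ⟨m, ?_⟩
  have : Complex.I * L (2 * π) = Complex.I * (2 * π * (m : ℂ)) := by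
    rw [hm]; ring
  have hL2 : L (2 * π) = 2 * π * (m : ℂ) := mul_left_cancel₀ Complex.I_ne_zero this
  exact hL2


lemma prod_tPt_eq_exp {n : ℕ} (u θ : Fin n → ℝ) (α : Fin n → ℤ) :
    ∏ i, tPt u θ i ^ α i = Complex.exp (∑ i, (α i : ℂ) * (u i + θ i * Complex.I)) := by
  rw [Complex.exp_sum]
  refine Finset.prod_congr rfl fun i _ => ?_
  rw [tPt, ← Complex.exp_int_mul]

lemma ne_zero_of_not_mem_amoeba {n : ℕ} {A : Finset (Fin n → ℤ)} {c : (Fin n → ℤ) → ℂ}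
    {u : Fin n → ℝ} (hu : u ∉ amoeba A c) (θ : Fin n → ℝ) :
    lEval A c (tPt u θ) ≠ 0 := by
  intro h0
  refine hu ⟨tPt u θ, ⟨fun i => Complex.exp_ne_zero _, h0⟩, ?_⟩
  funext i
  simp [logMap, tPt, Complex.norm_exp]


/-- For every point `u` of the amoeba complement, each component of the order
vector `ν(u)` is a (real) integer. -/
theorem stmt_7 {n : ℕ} (A : Finset (Fin n → ℤ)) (c : (Fin n → ℤ) → ℂ)
    (hA : A.Nonempty) (hc : ∀ α ∈ A, c α ≠ 0)
    (u : Fin n → ℝ) (hu : u ∉ amoeba A c) (j : Fin n) :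
    ∃ m : ℤ, order A c u j = (m : ℂ) := by
  cases n with
  | zero => exact j.elim0
  | succ n =>
  have hne : ∀ θ : Fin (n+1) → ℝ, lEval A c (tPt u θ) ≠ 0 :=
    fun θ => ne_zero_of_not_mem_amoeba hu θ
  -- exponential forms
  set E : (Fin (n+1) → ℤ) → (Fin (n+1) → ℝ) → ℂ :=
    fun α θ => ∑ i, (α i : ℂ) * (u i + θ i * Complex.I) with hE
  set den : (Fin (n+1) → ℝ) → ℂ := fun θ => ∑ α ∈ A, c α * Complex.exp (E α θ) with hden
  set num : (Fin (n+1) → ℝ) → ℂ := fun θ => ∑ α ∈ A, c α * (α j : ℂ) * Complex.exp (E α θ)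
    with hnum
  have hden_eq : ∀ θ, lEval A c (tPt u θ) = den θ := by
    intro θ
    exact Finset.sum_congr rfl fun α _ => by rw [prod_tPt_eq_exp]
  have hnum_eq : ∀ θ, (∑ α ∈ A, c α * (α j : ℂ) * ∏ i, tPt u θ i ^ α i) = num θ := by
    intro θ
    exact Finset.sum_congr rfl fun α _ => by rw [prod_tPt_eq_exp]
  have hden_ne : ∀ θ, den θ ≠ 0 := fun θ => hden_eq θ ▸ hne θ
  set h : (Fin (n+1) → ℝ) → ℂ := fun θ => num θ / den θ with hh
  have hEc : ∀ α, Continuous fun θ : Fin (n+1) → ℝ => E α θ := by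
    intro α
    apply continuous_finset_sum
    intro i _
    fun_prop
  have hdenc : Continuous den := by
    apply continuous_finset_sum; intro α _; exact continuous_const.mul ((hEc α).cexp)
  have hnumc : Continuous num := by
    apply continuous_finset_sum; intro α _; exact continuous_const.mul ((hEc α).cexp)
  have hhc : Continuous h := hnumc.div hdenc hden_ne
  -- splitting of the exponent along coordinate j
  set b : (Fin (n+1) → ℤ) → (Fin n → ℝ) → ℂ := fun α y =>
    (α j : ℂ) * (u j : ℂ) +
      ∑ i, (α (j.succAbove i) : ℂ) * (u (j.succAbove i) + y i * Complex.I) with hb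
  have hexparg : ∀ (α : Fin (n+1) → ℤ) (t : ℝ) (y : Fin n → ℝ),
      E α (j.insertNth t y) = b α y + (α j : ℂ) * t * Complex.I := by
    intro α t y
    simp only [hE, hb]
    rw [Fin.sum_univ_succAbove _ j]
    simp only [Fin.insertNth_apply_same, Fin.insertNth_apply_succAbove]
    ring
  -- the slice integral
  set g : (Fin n → ℝ) → ℂ := fun y => ∫ t in (0:ℝ)..(2*π), h (j.insertNth t y) with hg
  have hg_eq : ∀ y, g y = ∫ t in (0:ℝ)..(2*π),
      (∑ α ∈ A, c α * (α j : ℂ) * Complex.exp (b α y + (α j : ℂ) * t * Complex.I)) /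
      (∑ α ∈ A, c α * Complex.exp (b α y + (α j : ℂ) * t * Complex.I)) := by
    intro y
    refine intervalIntegral.integral_congr fun t _ => ?_
    simp only [hh, hnum, hden, hexparg]
  have hfy : ∀ (y : Fin n → ℝ) (t : ℝ),
      (∑ α ∈ A, c α * Complex.exp (b α y + (α j : ℂ) * t * Complex.I)) ≠ 0 := by
    intro y t
    have := hden_ne (j.insertNth t y)
    rw [hden] at this
    simpa only [hexparg] using this
  have hgint : ∀ y, ∃ m : ℤ, g y = 2 * π * (m : ℂ) := by
    intro y
    rw [hg_eq y]
    exact integral_quot_eq_int A c (fun α => α j) (fun α => b α y) (hfy y)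
  -- continuity of the slice integral
  have hbc : ∀ α, Continuous fun y : Fin n → ℝ => b α y := by
    intro α
    apply Continuous.add continuous_const
    apply continuous_finset_sum; intro i _; fun_prop
  have hgc : Continuous g := by
    have : g = fun y => ∫ t in (0:ℝ)..(2*π),
        (∑ α ∈ A, c α * (α j : ℂ) * Complex.exp (b α y + (α j : ℂ) * t * Complex.I)) /
        (∑ α ∈ A, c α * Complex.exp (b α y + (α j : ℂ) * t * Complex.I)) := funext hg_eq
    rw [this]
    apply intervalIntegral.continuous_parametric_intervalIntegral_of_continuous _
      continuous_const
    have hNu : Continuous fun p : (Fin n → ℝ) × ℝ =>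
        (∑ α ∈ A, c α * (α j : ℂ) * Complex.exp (b α p.1 + (α j : ℂ) * p.2 * Complex.I)) := by
      apply continuous_finset_sum; intro α _
      exact continuous_const.mul ((((hbc α).comp continuous_fst).add
        ((continuous_const.mul (Complex.continuous_ofReal.comp continuous_snd)).mul
          continuous_const)).cexp)
    have hDu : Continuous fun p : (Fin n → ℝ) × ℝ =>
        (∑ α ∈ A, c α * Complex.exp (b α p.1 + (α j : ℂ) * p.2 * Complex.I)) := by
      apply continuous_finset_sum; intro α _
      exact continuous_const.mul ((((hbc α).comp continuous_fst).add
        ((continuous_const.mul (Complex.continuous_ofReal.comp continuous_snd)).mul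
          continuous_const)).cexp)
    exact hNu.div hDu fun p => hfy p.1 p.2
  -- constancy of g
  obtain ⟨m₀, hm₀⟩ := hgint 0
  have hno : ∀ (y₁ y₂ : Fin n → ℝ) (m₁ m₂ : ℤ), g y₁ = 2*π*(m₁:ℂ) → g y₂ = 2*π*(m₂:ℂ) →
      ¬ (m₁ < m₂) := by
    intro y₁ y₂ m₁ m₂ h₁ h₂ hlt
    set gr : (Fin n → ℝ) → ℝ := fun y => (g y).re with hgr
    have hgrc : Continuous gr := Complex.continuous_re.comp hgc
    have hr₁ : gr y₁ = 2*π*m₁ := by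
      rw [hgr]; simp only [h₁]
      simpa using congrArg Complex.re (h₁)
    have hr₂ : gr y₂ = 2*π*m₂ := by
      simpa [hgr] using congrArg Complex.re (h₂)
    have hmem : (2*π*m₁ + π) ∈ Set.Icc (gr y₁) (gr y₂) := by
      rw [hr₁, hr₂]
      constructor
      · nlinarith [pi_pos]
      · have : (m₁ : ℝ) + 1 ≤ m₂ := by exact_mod_cast hlt
        nlinarith [pi_pos]
    obtain ⟨y₃, hy₃⟩ := intermediate_value_univ y₁ y₂ hgrc hmem
    obtain ⟨m₃, hm₃⟩ := hgint y₃
    have hr₃ : gr y₃ = 2*π*m₃ := by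
      simpa [hgr] using congrArg Complex.re (hm₃)
    rw [hy₃] at hr₃
    have : (2*m₁ + 1 : ℝ) = 2*m₃ := by nlinarith [pi_pos]
    have : (2*m₁ + 1 : ℤ) = 2*m₃ := by exact_mod_cast this
    omega
  have hconst : ∀ y, g y = 2*π*(m₀:ℂ) := by
    intro y
    obtain ⟨m₁, hm₁⟩ := hgint y
    have e₁ : ¬ (m₁ < m₀) := hno y 0 m₁ m₀ hm₁ hm₀
    have e₂ : ¬ (m₀ < m₁) := hno 0 y m₀ m₁ hm₀ hm₁
    have : m₁ = m₀ := by omega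
    rw [hm₁, this]
  -- Fubini
  refine ⟨m₀, ?_⟩
  set e := MeasurableEquiv.piFinSuccAbove (fun _ : Fin (n+1) => ℝ) j with he
  have hmp : MeasurePreserving (⇑e.symm)
      (volume : Measure (ℝ × (Fin n → ℝ))) (volume : Measure (Fin (n+1) → ℝ)) := by
    have h1 := (measurePreserving_piFinSuccAbove (fun _ : Fin (n+1) => (volume : Measure ℝ)) j).symm e
    rw [Measure.volume_eq_prod, volume_pi]
    convert h1 using 2
    · rfl
    · rfl
    · exact volume_pi
  have hpre : (⇑e.symm) ⁻¹' cube (n+1) = (Set.Icc (0:ℝ) (2*π)) ×ˢ cube n := by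
    ext p
    simp only [Set.mem_preimage, cube, Set.mem_pi, Set.mem_univ, forall_true_left,
      Set.mem_prod, he, MeasurableEquiv.piFinSuccAbove_symm_apply]
    rw [Fin.forall_iff_succAbove j]
    simp [Fin.insertNth_apply_same, Fin.insertNth_apply_succAbove]
  have hint : IntegrableOn (fun p : ℝ × (Fin n → ℝ) => h (e.symm p))
      ((Set.Icc (0:ℝ) (2*π)) ×ˢ cube n) volume := by
    have hins : Continuous fun p : ℝ × (Fin n → ℝ) => (j.insertNth p.1 p.2 : Fin (n+1) → ℝ) :=
      Continuous.finInsertNth (A := fun _ => ℝ) j continuous_fst continuous_snd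
    have hcont : Continuous fun p : ℝ × (Fin n → ℝ) => h (j.insertNth p.1 p.2) :=
      hhc.comp hins
    have heq : (fun p : ℝ × (Fin n → ℝ) => h (e.symm p))
        = fun p : ℝ × (Fin n → ℝ) => h (j.insertNth p.1 p.2) := by
      funext p
      rfl
    rw [heq]
    exact ContinuousOn.integrableOn_compact
      (isCompact_Icc.prod (isCompact_univ_pi fun _ => isCompact_Icc)) hcont.continuousOn
  have hpi : (0:ℝ) ≤ 2*π := by positivity
  have hrr : (volume : Measure (ℝ × (Fin n → ℝ))).restrict ((Set.Icc (0:ℝ) (2*π)) ×ˢ cube n)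
      = ((volume : Measure ℝ).restrict (Set.Icc (0:ℝ) (2*π))).prod
        ((volume : Measure (Fin n → ℝ)).restrict (cube n)) := by
    rw [Measure.volume_eq_prod, Measure.prod_restrict]
  have hint' : Integrable (fun p : ℝ × (Fin n → ℝ) => h (e.symm p))
      (((volume : Measure ℝ).restrict (Set.Icc (0:ℝ) (2*π))).prod
        ((volume : Measure (Fin n → ℝ)).restrict (cube n))) := by
    rw [← hrr]; exact hint
  have key : (∫ θ in cube (n+1), h θ) = (((2*π)^n : ℝ) : ℂ) * (2*π*(m₀:ℂ)) := by
    calc (∫ θ in cube (n+1), h θ)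
        = ∫ p in (⇑e.symm) ⁻¹' cube (n+1), h (e.symm p) :=
          (hmp.setIntegral_preimage_emb e.symm.measurableEmbedding h _).symm
      _ = ∫ p in (Set.Icc (0:ℝ) (2*π)) ×ˢ cube n, h (e.symm p) := by rw [hpre]
      _ = ∫ y in cube n, ∫ t in Set.Icc (0:ℝ) (2*π), h (e.symm (t, y)) := by
          have hps := MeasureTheory.integral_prod_symm
            (fun p : ℝ × (Fin n → ℝ) => h (e.symm p)) hint'
          rw [← hrr] at hps
          exact hps
      _ = ∫ y in cube n, g y := by
          refine setIntegral_congr_fun ?ms fun y _ => ?_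
          · exact MeasurableSet.univ_pi fun _ => measurableSet_Icc
          · rw [hg]
            have : ∀ t : ℝ, h (e.symm (t, y)) = h (j.insertNth t y) := fun t => rfl
            simp only [this]
            rw [intervalIntegral.integral_of_le hpi, ← integral_Icc_eq_integral_Ioc]
      _ = ∫ _y in cube n, (2*π*(m₀:ℂ)) := by
          refine setIntegral_congr_fun ?ms2 fun y _ => hconst y
          exact MeasurableSet.univ_pi fun _ => measurableSet_Icc
      _ = (((2*π)^n : ℝ) : ℂ) * (2*π*(m₀:ℂ)) := by
          rw [setIntegral_const]
          have hv : volume (cube n) = ENNReal.ofReal (2*π) ^ n := by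
            rw [cube, volume_pi, Measure.pi_pi]
            simp [Real.volume_Icc]
          rw [measureReal_def, hv]
          simp [ENNReal.toReal_pow, ENNReal.toReal_ofReal hpi, ENNReal.toReal_ofReal pi_pos.le, Complex.real_smul]
  have horder : order A c u j = (((2 * π) ^ (n+1) : ℝ) : ℂ)⁻¹ * ∫ θ in cube (n+1), h θ := by
    rw [order]
    congr 1
    refine setIntegral_congr_fun (MeasurableSet.univ_pi fun _ => measurableSet_Icc)
      fun θ _ => ?_
    rw [hnum_eq, hden_eq]
  rw [horder, key]
  have hπ : (π : ℂ) ≠ 0 := Complex.ofReal_ne_zero.mpr pi_ne_zero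
  push_cast
  field_simp
  ring
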